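/- arXiv:2006.04023 — 5 statements merged into one kernel-verified Lean document; each statement's English description precedes it below -/
import Mathlib

section
/- The algebra of O(n)-invariant complex polynomial functions on ℝⁿ equals the polynomial algebra ℂ[q] generated by the quadratic form q(x) = ∑_{i=1}^n x_i²; that is, every polynomial f on ℝⁿ satisfying f(gx) = f(x) for all g ∈ O(n) is a polynomial in q. -/
open MvPolynomial

lemma sum_sq_mulVec {n : ℕ} (g : Matrix (Fin n) (Fin n) ℝ)
    (hg : g ∈ Matrix.orthogonalGroup (Fin n) ℝ) (x : Fin n → ℝ) :
    ∑ i, (Matrix.mulVec g x i)^2 = ∑ i, x i ^ 2 := by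
  have hstar : star g = g.transpose := by
    ext i j; simp [Matrix.star_apply]
  have hgt : g.transpose * g = 1 := by
    rw [Matrix.mem_orthogonalGroup_iff'] at hg
    exact hg
  have key : dotProduct (Matrix.mulVec g x) (Matrix.mulVec g x) = dotProduct x x := by
    rw [Matrix.dotProduct_mulVec, ← Matrix.mulVec_transpose, Matrix.mulVec_mulVec, hgt,
      Matrix.one_mulVec]
  simpa [dotProduct, sq] using key

lemma eval_real_zero : ∀ {n : ℕ} (f : MvPolynomial (Fin n) ℂ),
    (∀ x : Fin n → ℝ, eval (fun i => (x i : ℂ)) f = 0) → f = 0 := by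
  intro n
  induction n with
  | zero =>
    intro f h
    have := h (fun _ => 0)
    rw [eq_C_of_isEmpty f] at this ⊢
    rw [eval_C] at this
    simp [this]
  | succ n ih =>
    intro f h
    have hF : ∀ k, (finSuccEquiv ℂ n f).coeff k = 0 := by
      intro k
      apply ih
      intro y
      have hQ : Polynomial.map (eval (fun i => (y i : ℂ))) (finSuccEquiv ℂ n f) = 0 := by
        apply Polynomial.eq_zero_of_infinite_isRoot
        apply Set.infinite_of_injective_forall_mem
          (f := fun t : ℝ => (t : ℂ)) Complex.ofReal_injective
        intro t
        show Polynomial.IsRoot _ _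
        have := h (Fin.cons t y)
        rw [show (fun i => ((Fin.cons t y : Fin (n+1) → ℝ) i : ℂ)) =
            (Fin.cons (t : ℂ) (fun i => (y i : ℂ)) : Fin (n+1) → ℂ) from
            funext (Fin.cases rfl (fun i => rfl))] at this
        rw [eval_eq_eval_mv_eval'] at this
        exact this
      have h2 := congrArg (fun Q => Polynomial.coeff Q k) hQ
      simpa using h2
    have : finSuccEquiv ℂ n f = 0 := Polynomial.ext fun k => by simp [hF k]
    exact (map_eq_zero_iff _ (AlgEquiv.injective _)).mp this

lemma coeff_comp_negX (P : Polynomial ℂ) (k : ℕ) :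
    (P.comp (-Polynomial.X)).coeff k = (-1)^k * P.coeff k := by
  induction P using Polynomial.induction_on' with
  | add p q hp hq => simp [Polynomial.add_comp, hp, hq, mul_add]
  | monomial m a =>
    rw [Polynomial.monomial_comp]
    rw [show ((-Polynomial.X : Polynomial ℂ)^m) = Polynomial.C ((-1)^m) * Polynomial.X^m from by
      rw [neg_pow, map_pow, map_neg, map_one]]
    simp only [← mul_assoc, ← Polynomial.C_mul, Polynomial.coeff_C_mul, Polynomial.coeff_X_pow,
      Polynomial.coeff_monomial]
    by_cases h : k = m
    · subst h; simp [mul_comm]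
    · simp [h, if_neg (Ne.symm h)]

lemma even_poly (P : Polynomial ℂ) (h : P.comp (-Polynomial.X) = P) :
    ∃ R : Polynomial ℂ, P = R.comp (Polynomial.X ^ 2) := by
  have hodd : ∀ k, Odd k → P.coeff k = 0 := by
    intro k hk
    have := congrArg (fun Q => Polynomial.coeff Q k) h
    simp only [coeff_comp_negX, hk.neg_one_pow] at this
    linear_combination (-1/2 : ℂ) * this
  refine ⟨∑ k ∈ Finset.range (P.natDegree + 1), Polynomial.C (P.coeff (2*k)) * Polynomial.X ^ k, ?_⟩
  ext m
  rw [Polynomial.sum_comp]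
  simp only [Polynomial.mul_comp, Polynomial.C_comp, Polynomial.pow_comp, Polynomial.X_comp,
    ← pow_mul]
  simp only [Polynomial.finset_sum_coeff, Polynomial.coeff_C_mul, Polynomial.coeff_X_pow]
  rcases Nat.even_or_odd m with ⟨j, hj⟩ | hm
  · have hcond : ∀ k, (m = 2 * k) ↔ k = j := by omega
    simp only [hcond, mul_ite, mul_one, mul_zero]
    rw [Finset.sum_ite_eq' (Finset.range (P.natDegree + 1)) j]
    by_cases hj' : j ∈ Finset.range (P.natDegree + 1)
    · simp [hj', show 2*j = m by omega]
    · have hdm : P.natDegree < m := by simp at hj'; omega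
      simp [hj', Polynomial.coeff_eq_zero_of_natDegree_lt hdm]
  · have hnc : ∀ k, ¬ (m = 2 * k) := fun k hk => (Nat.not_even_iff_odd.mpr hm) ⟨k, by omega⟩
    simp [hnc, hodd m hm]

lemma exists_orthog {n : ℕ} (x : EuclideanSpace ℝ (Fin (n+1))) :
    ∃ g : Matrix (Fin (n+1)) (Fin (n+1)) ℝ, g ∈ Matrix.orthogonalGroup (Fin (n+1)) ℝ ∧
      Matrix.mulVec g (fun i => if i = 0 then ‖x‖ else 0) = x := by
  by_cases hx : x = 0
  · refine ⟨1, one_mem _, ?_⟩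
    subst hx
    funext i
    simp [Matrix.one_mulVec]
  · have hnx : ‖x‖ ≠ 0 := norm_ne_zero_iff.mpr hx
    set u : EuclideanSpace ℝ (Fin (n+1)) := ‖x‖⁻¹ • x with hu
    have hun : ‖u‖ = 1 := by
      rw [hu, norm_smul, norm_inv, norm_norm, inv_mul_cancel₀ hnx]
    have horth : Orthonormal ℝ (({0} : Set (Fin (n+1))).restrict (fun _ => u)) := by
      rw [orthonormal_iff_ite]
      intro i j
      rw [Subsingleton.elim i j, if_pos rfl]
      show (inner ℝ u u : ℝ) = 1
      rw [real_inner_self_eq_norm_sq, hun, one_pow]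
    obtain ⟨b, hb⟩ := horth.exists_orthonormalBasis_extension_of_card_eq
      (by simp) (v := fun _ => u) (s := {0})
    have hb0 : b 0 = u := hb 0 rfl
    refine ⟨Matrix.of (fun i j => b j i), ?_, ?_⟩
    · rw [Matrix.mem_orthogonalGroup_iff']
      ext j k
      have := orthonormal_iff_ite.mp b.orthonormal j k
      rw [PiLp.inner_apply] at this
      simp only [RCLike.inner_apply, starRingEnd_apply, star_trivial] at this
      simpa [Matrix.mul_apply, Matrix.star_eq_conjTranspose, Matrix.conjTranspose_apply,
        Matrix.one_apply, mul_comm] using this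
    · funext i
      have : ∀ j, (Matrix.of (fun i j => b j i)) i j * (if j = 0 then ‖x‖ else 0)
          = if j = 0 then b 0 i * ‖x‖ else 0 := by
        intro j; by_cases hj : j = 0 <;> simp [hj]
      simp only [Matrix.mulVec, dotProduct, this, Finset.sum_ite_eq',
        Finset.mem_univ, if_true]
      rw [hb0]
      show (‖x‖⁻¹ • x) i * ‖x‖ = x i
      rw [PiLp.smul_apply, smul_eq_mul]
      field_simp

lemma aeval_eq_eval' {n : ℕ} (v : Fin n → ℂ) (f : MvPolynomial (Fin n) ℂ) :
    MvPolynomial.aeval v f = eval v f := by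
  rw [aeval_def]
  rfl

/-- Evaluation of `Polynomial.aeval q p` at a point. -/
lemma eval_aeval_q {n : ℕ} (v : Fin n → ℂ) (p : Polynomial ℂ) :
    eval v (Polynomial.aeval (∑ i : Fin n, X i ^ 2) p)
      = Polynomial.eval (∑ i, (v i)^2) p := by
  rw [← aeval_eq_eval']
  rw [← Polynomial.aeval_algHom_apply (MvPolynomial.aeval v) _ p]
  rw [show (MvPolynomial.aeval v) (∑ i : Fin n, X i ^ 2) = ∑ i, (v i)^2 by simp]
  rw [Polynomial.coe_aeval_eq_eval]

/-- The `O(n)`-invariant polynomial functions on `ℝⁿ` are exactly the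
polynomials in the quadratic form `q = ∑ xᵢ²`: a polynomial `f` satisfies
`f(gx) = f(x)` for all `g ∈ O(n)` and all `x ∈ ℝⁿ` iff `f = p(q)` for some
one-variable polynomial `p`. -/
theorem invariants_eq_poly_in_q (n : ℕ) (f : MvPolynomial (Fin n) ℂ) :
    (∀ g : Matrix.orthogonalGroup (Fin n) ℝ, ∀ x : Fin n → ℝ,
        eval (fun i => ((Matrix.mulVec (g : Matrix (Fin n) (Fin n) ℝ) x) i : ℂ)) f =
        eval (fun i => (x i : ℂ)) f) ↔
      ∃ p : Polynomial ℂ, f = Polynomial.aeval (∑ i : Fin n, X i ^ 2) p := by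
  constructor
  · intro h
    cases n with
    | zero =>
      refine ⟨Polynomial.C (f.coeff 0), ?_⟩
      rw [eq_C_of_isEmpty f]
      simp
    | succ m =>
      set P : Polynomial ℂ :=
        MvPolynomial.aeval (fun i : Fin (m+1) => if i = 0 then (Polynomial.X : Polynomial ℂ) else 0) f with hP
      have hPeval : ∀ t : ℂ,
          Polynomial.eval t P = eval (fun i : Fin (m+1) => if i = 0 then t else 0) f := by
        intro t
        rw [hP, ← Polynomial.coe_aeval_eq_eval, comp_aeval_apply]
        rw [show (fun i : Fin (m+1) => (Polynomial.aeval t)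
            (if i = 0 then (Polynomial.X : Polynomial ℂ) else 0)) =
            (fun i : Fin (m+1) => if i = 0 then t else 0) from
          funext fun i => by by_cases hi : i = 0 <;> simp [hi]]
        rw [aeval_eq_eval']
      -- evenness of P
      have heven : P.comp (-Polynomial.X) = P := by
        rw [← sub_eq_zero]
        apply Polynomial.eq_zero_of_infinite_isRoot
        apply Set.infinite_of_injective_forall_mem
          (f := fun t : ℝ => (t : ℂ)) Complex.ofReal_injective
        intro t
        show Polynomial.IsRoot _ _
        rw [Polynomial.IsRoot, Polynomial.eval_sub, Polynomial.eval_comp, Polynomial.eval_neg,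
          Polynomial.eval_X, sub_eq_zero, hPeval, hPeval]
        set D : Matrix (Fin (m+1)) (Fin (m+1)) ℝ :=
          Matrix.diagonal (fun i => if i = 0 then (-1:ℝ) else 1) with hD
        have hDmem : D ∈ Matrix.orthogonalGroup (Fin (m+1)) ℝ := by
          rw [Matrix.mem_orthogonalGroup_iff']
          have hstar : star D = D := by
            rw [hD, Matrix.star_eq_conjTranspose, Matrix.diagonal_conjTranspose]
            simp
          rw [hD, Matrix.diagonal_transpose, Matrix.diagonal_mul_diagonal]
          ext i j
          rw [Matrix.diagonal_apply, Matrix.one_apply]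
          by_cases hij : i = j
          · subst hij
            by_cases hi : i = 0 <;> simp [hi]
          · simp [hij]

        have hkey := h ⟨D, hDmem⟩ (fun i => if i = 0 then t else 0)
        have hDv : Matrix.mulVec D (fun i => if i = 0 then t else 0)
            = fun i => if i = 0 then -t else 0 := by
          funext i
          rw [hD, Matrix.mulVec_diagonal]
          by_cases hi : i = 0 <;> simp [hi]
        rw [hDv] at hkey
        rw [show (fun i : Fin (m+1) => ((if i = 0 then -t else 0 : ℝ) : ℂ)) =
            (fun i : Fin (m+1) => if i = 0 then (-(t:ℂ)) else 0) from
          funext fun i => by by_cases hi : i = 0 <;> simp [hi]] at hkey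
        rw [show (fun i : Fin (m+1) => ((if i = 0 then t else 0 : ℝ) : ℂ)) =
            (fun i : Fin (m+1) => if i = 0 then (t:ℂ) else 0) from
          funext fun i => by by_cases hi : i = 0 <;> simp [hi]] at hkey
        exact hkey
      obtain ⟨R, hR⟩ := even_poly P heven
      refine ⟨R, ?_⟩
      rw [← sub_eq_zero]
      apply eval_real_zero
      intro x
      rw [map_sub]
      rw [sub_eq_zero]
      -- LHS via transitivity
      obtain ⟨x', hx'⟩ : ∃ y : EuclideanSpace ℝ (Fin (m+1)), y.ofLp = x := ⟨WithLp.toLp 2 x, rfl⟩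
      obtain ⟨g, hg, hgw⟩ := exists_orthog x'
      have hkey : eval (fun i => ((Matrix.mulVec g (fun j => if j = 0 then ‖x'‖ else 0)) i : ℂ)) f
          = eval (fun i => ((if i = 0 then ‖x'‖ else 0 : ℝ) : ℂ)) f :=
        h ⟨g, hg⟩ _
      rw [hgw] at hkey
      have hLHS : eval (fun i => (x i : ℂ)) f = Polynomial.eval ((‖x'‖ : ℝ) : ℂ) P := by
        rw [← hx', hPeval]
        rw [show (fun i : Fin (m+1) => if i = 0 then ((‖x'‖ : ℝ) : ℂ) else 0) =
            (fun i : Fin (m+1) => ((if i = 0 then ‖x'‖ else 0 : ℝ) : ℂ)) from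
          funext fun i => by by_cases hi : i = 0 <;> simp [hi]]
        exact hkey
      rw [hLHS, hR, Polynomial.eval_comp, Polynomial.eval_pow, Polynomial.eval_X]
      rw [eval_aeval_q]
      congr 1
      have hnorm : ‖x'‖ ^ 2 = ∑ i, x i ^ 2 := by
        rw [EuclideanSpace.norm_eq,
          Real.sq_sqrt (Finset.sum_nonneg fun i _ => sq_nonneg _), hx']
        simp [Real.norm_eq_abs, sq_abs]
      exact_mod_cast hnorm
  · rintro ⟨p, rfl⟩ g x
    rw [eval_aeval_q, eval_aeval_q]
    congr 1
    have := sum_sq_mulVec (g : Matrix (Fin n) (Fin n) ℝ) g.2 x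
    exact_mod_cast this
end

section
/- A polynomial f on ℝⁿ is O(n)-invariant if and only if f is invariant under the subgroup SO(n) together with a single reflection; in particular for n ≥ 1, f is O(n)-invariant iff f(x) depends only on ‖x‖². -/
open MvPolynomial


set_option maxRecDepth 8000 in
open Polynomial in
lemma coeff_comp_neg_X (q : Polynomial ℂ) (k : ℕ) :
    (q.comp (-Polynomial.X)).coeff k = (-1)^k * q.coeff k := by
  conv_lhs => rw [Polynomial.comp, Polynomial.eval₂_eq_sum, Polynomial.sum]
  rw [Polynomial.finset_sum_coeff]
  have h : ∀ i ∈ q.support, (Polynomial.C (q.coeff i) * (-Polynomial.X)^i).coeff k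
      = if k = i then (-1)^k * q.coeff i else 0 := by
    intro i _
    rw [neg_pow, ← mul_assoc, ← Polynomial.C_1, ← Polynomial.C_neg,
      ← Polynomial.C_pow, ← Polynomial.C_mul, Polynomial.coeff_C_mul, Polynomial.coeff_X_pow]
    by_cases hk : k = i <;> simp [hk] <;> ring
  rw [Finset.sum_congr rfl h, Finset.sum_ite_eq]
  by_cases hk : k ∈ q.support
  · simp [hk]
  · simp [hk, Polynomial.notMem_support_iff.mp hk]

open Polynomial in
lemma even_poly_exists (q : Polynomial ℂ) (hq : ∀ t : ℝ, q.eval (-t : ℂ) = q.eval (t : ℂ)) :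
    ∃ p : Polynomial ℂ, ∀ t : ℂ, q.eval t = p.eval (t^2) := by
  have hcomp : q.comp (-Polynomial.X) = q := by
    apply Polynomial.eq_of_infinite_eval_eq
    apply Set.Infinite.mono (s := Set.range (Complex.ofReal))
    · rintro _ ⟨t, rfl⟩
      simp only [Set.mem_setOf_eq, Polynomial.eval_comp, Polynomial.eval_neg, Polynomial.eval_X]
      exact hq t
    · exact Set.infinite_range_of_injective Complex.ofReal_injective
  have heven : ∀ k ∈ q.support, Even k := by
    intro k hk
    by_contra hodd
    have h1 : ((-1 : ℂ))^k = -1 := Odd.neg_one_pow (Nat.not_even_iff_odd.mp hodd)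
    have h2 := coeff_comp_neg_X q k
    rw [hcomp, h1] at h2
    exact (Polynomial.mem_support_iff.mp hk) (by linear_combination (1/2 : ℂ) * h2)
  refine ⟨∑ k ∈ q.support, Polynomial.C (q.coeff k) * Polynomial.X ^ (k / 2), fun t => ?_⟩
  rw [Polynomial.eval_finset_sum]
  rw [Polynomial.eval_eq_sum, Polynomial.sum]
  apply Finset.sum_congr rfl
  intro k hk
  rw [Polynomial.eval_mul, Polynomial.eval_C, Polynomial.eval_pow,
    Polynomial.eval_X, ← pow_mul, Nat.mul_div_cancel' ((heven k hk).two_dvd)]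

lemma isometry_to_orthogonal (n : ℕ)
    (T : EuclideanSpace ℝ (Fin n) ≃ₗᵢ[ℝ] EuclideanSpace ℝ (Fin n)) :
    ∃ g : Matrix.orthogonalGroup (Fin n) ℝ, ∀ v : Fin n → ℝ,
      Matrix.mulVec (g : Matrix (Fin n) (Fin n) ℝ) v = T ((WithLp.equiv 2 _).symm v) := by
  classical
  let L := WithLp.linearEquiv 2 ℝ (Fin n → ℝ)
  let lin : (Fin n → ℝ) →ₗ[ℝ] (Fin n → ℝ) := (L.toLinearMap.comp T.toLinearEquiv.toLinearMap).comp L.symm.toLinearMap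
  let M := LinearMap.toMatrix' lin
  have hmul : ∀ v : Fin n → ℝ, Matrix.mulVec M v = T ((WithLp.equiv 2 _).symm v) := by
    intro v
    have : Matrix.mulVec M v = lin v := by
      rw [← Matrix.toLin'_apply, Matrix.toLin'_toMatrix']
    rw [this]
    rfl
  have hcol : ∀ i j, M i j = (T ((WithLp.equiv 2 _).symm (Pi.single j 1))) i := by
    intro i j
    have := congrFun (hmul (Pi.single j 1)) i
    rw [← this]
    simp [Matrix.mulVec, dotProduct, Pi.single_apply, mul_ite, Finset.sum_ite_eq']
  have hmem : M ∈ Matrix.orthogonalGroup (Fin n) ℝ := by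
    rw [Matrix.mem_orthogonalGroup_iff']
    ext j k
    simp only [Matrix.mul_apply, Matrix.one_apply, Matrix.star_apply, star_trivial,
      Matrix.transpose_apply]
    have : ∑ i, M i j * M i k
        = inner (𝕜 := ℝ) (T ((WithLp.equiv 2 _).symm (Pi.single j 1)))
            (T ((WithLp.equiv 2 _).symm (Pi.single k 1))) := by
      rw [PiLp.inner_apply]
      refine Finset.sum_congr rfl fun i _ => ?_
      rw [hcol, hcol]
      simp [RCLike.inner_apply]; ring
    rw [this, T.inner_map_map, PiLp.inner_apply]
    simp only [RCLike.inner_apply, starRingEnd_apply, star_trivial, WithLp.equiv_symm_apply, PiLp.toLp_apply,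
      Pi.single_apply, mul_ite, mul_one, mul_zero, ite_and]
    rw [Finset.sum_ite_eq' Finset.univ j]
    by_cases hjk : j = k <;> simp [hjk, eq_comm]
  exact ⟨⟨M, hmem⟩, hmul⟩

lemma exists_orth_to (n : ℕ) (hn : 0 < n) (x : Fin n → ℝ) :
    ∃ g : Matrix.orthogonalGroup (Fin n) ℝ,
      Matrix.mulVec (g : Matrix (Fin n) (Fin n) ℝ)
        (fun i => if i = ⟨0, hn⟩ then Real.sqrt (∑ i, x i ^ 2) else 0) = x := by
  set r := Real.sqrt (∑ i, x i ^ 2) with hr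
  set y : EuclideanSpace ℝ (Fin n) := (WithLp.equiv 2 _).symm x with hy
  set v₀ : EuclideanSpace ℝ (Fin n) := r • EuclideanSpace.single ⟨0, hn⟩ (1 : ℝ) with hv
  have hnorm : ‖v₀‖ = ‖y‖ := by
    rw [hv, norm_smul, EuclideanSpace.norm_single, EuclideanSpace.norm_eq]
    simp only [Real.norm_eq_abs, sq_abs, mul_one]
    rw [abs_one, mul_one, abs_of_nonneg (Real.sqrt_nonneg _)]
    rfl
  obtain ⟨g, hg⟩ := isometry_to_orthogonal n (Submodule.reflection (ℝ ∙ (v₀ - y))ᗮ)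
  refine ⟨g, ?_⟩
  have hsingle : ((WithLp.equiv 2 ((i : Fin n) → ℝ)).symm
      (fun i => if i = ⟨0, hn⟩ then r else 0)) = v₀ := by
    ext i
    simp [hv, EuclideanSpace.single_apply, mul_comm]
  rw [hg, hsingle, Submodule.reflection_sub hnorm]
  rfl

-- reflection matrix facts
lemma refl_mem (n : ℕ) (hn : 0 < n) :
    (Matrix.diagonal fun i : Fin n => if i = ⟨0, hn⟩ then (-1 : ℝ) else 1)
      ∈ Matrix.orthogonalGroup (Fin n) ℝ := by
  rw [Matrix.mem_orthogonalGroup_iff' (n := Fin n) (R := ℝ)]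
  have : star (Matrix.diagonal fun i : Fin n => if i = ⟨0, hn⟩ then (-1 : ℝ) else 1)
      = Matrix.diagonal fun i : Fin n => if i = ⟨0, hn⟩ then (-1 : ℝ) else 1 := by
    ext i j
    simp [Matrix.star_apply, Matrix.diagonal_apply]
    aesop
  rw [show (Matrix.diagonal fun i : Fin n => if i = ⟨0, hn⟩ then (-1 : ℝ) else 1).transpose = _ from this, Matrix.diagonal_mul_diagonal]
  have hd : (fun i : Fin n => (if i = ⟨0, hn⟩ then (-1:ℝ) else 1) * (if i = ⟨0, hn⟩ then (-1:ℝ) else 1)) = fun _ => (1:ℝ) := by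
    funext i
    by_cases h : i = ⟨0, hn⟩ <;> simp [h]
  rw [hd, Matrix.diagonal_one]

lemma refl_mul_self (n : ℕ) (hn : 0 < n) :
    (Matrix.diagonal fun i : Fin n => if i = ⟨0, hn⟩ then (-1 : ℝ) else 1) *
    (Matrix.diagonal fun i : Fin n => if i = ⟨0, hn⟩ then (-1 : ℝ) else 1) = 1 := by
  rw [Matrix.diagonal_mul_diagonal]
  have hd : (fun i : Fin n => (if i = ⟨0, hn⟩ then (-1:ℝ) else 1) * (if i = ⟨0, hn⟩ then (-1:ℝ) else 1)) = fun _ => (1:ℝ) := by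
    funext i
    by_cases h : i = ⟨0, hn⟩ <;> simp [h]
  rw [hd, Matrix.diagonal_one]

lemma refl_det (n : ℕ) (hn : 0 < n) :
    (Matrix.diagonal fun i : Fin n => if i = ⟨0, hn⟩ then (-1 : ℝ) else 1).det = -1 := by
  rw [Matrix.det_diagonal]
  rw [Finset.prod_ite_eq' Finset.univ (⟨0, hn⟩ : Fin n) (fun _ => (-1 : ℝ))]
  simp

lemma orth_sum_sq (n : ℕ) (g : Matrix.orthogonalGroup (Fin n) ℝ) (x : Fin n → ℝ) :
    ∑ i : Fin n, (Matrix.mulVec (g : Matrix (Fin n) (Fin n) ℝ) x) i ^ 2 = ∑ i : Fin n, x i ^ 2 := by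
  have hstar : ((g : Matrix (Fin n) (Fin n) ℝ).transpose) * g = 1 := by
    have h := (Matrix.mem_orthogonalGroup_iff' (n := Fin n) (R := ℝ)).mp g.2
    convert h using 2
  have key : Matrix.mulVec ((g : Matrix (Fin n) (Fin n) ℝ).transpose)
      (Matrix.mulVec (g : Matrix (Fin n) (Fin n) ℝ) x) = x := by
    rw [Matrix.mulVec_mulVec, hstar, Matrix.one_mulVec]
  calc ∑ i : Fin n, (Matrix.mulVec (g : Matrix (Fin n) (Fin n) ℝ) x) i ^ 2
      = dotProduct (Matrix.mulVec (g : Matrix (Fin n) (Fin n) ℝ) x)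
          (Matrix.mulVec (g : Matrix (Fin n) (Fin n) ℝ) x) := by
        simp [dotProduct, sq]
    _ = ∑ i : Fin n, x i ^ 2 := by
        rw [Matrix.dotProduct_mulVec, ← Matrix.mulVec_transpose, key]
        simp [dotProduct, sq]

open MvPolynomial in
lemma eval_q (n : ℕ) (hn : 0 < n) (f : MvPolynomial (Fin n) ℂ) (t : ℂ) :
    (MvPolynomial.aeval (fun i : Fin n => if i = ⟨0, hn⟩ then (Polynomial.X : Polynomial ℂ) else 0) f).eval t
      = eval (fun i : Fin n => if i = ⟨0, hn⟩ then t else 0) f := by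
  have h := MvPolynomial.comp_aeval
    (f := fun i : Fin n => if i = ⟨0, hn⟩ then (Polynomial.X : Polynomial ℂ) else 0)
    (φ := Polynomial.aeval t)
  have h2 := congrFun (congrArg DFunLike.coe h) f
  simp only [AlgHom.coe_comp, Function.comp_apply] at h2
  rw [show (Polynomial.aeval t) ((MvPolynomial.aeval fun i : Fin n => if i = ⟨0, hn⟩ then (Polynomial.X : Polynomial ℂ) else 0) f) = Polynomial.eval t ((MvPolynomial.aeval fun i : Fin n => if i = ⟨0, hn⟩ then (Polynomial.X : Polynomial ℂ) else 0) f) from by rw [Polynomial.aeval_def]; simp [Polynomial.eval₂_eq_eval_map]] at h2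
  rw [h2]
  rw [show (MvPolynomial.aeval fun i : Fin n => (Polynomial.aeval t) (if i = ⟨0, hn⟩ then (Polynomial.X : Polynomial ℂ) else 0)) f = _ from rfl]
  rw [MvPolynomial.aeval_def, show (algebraMap ℂ ℂ) = RingHom.id ℂ from Algebra.algebraMap_self,
    MvPolynomial.eval, MvPolynomial.coe_eval₂Hom]
  congr 1
  funext i
  by_cases h : i = ⟨0, hn⟩ <;> simp [h]

/-- A polynomial on `ℝⁿ` (n ≥ 1) is `O(n)`-invariant iff it is invariant under
`SO(n)` together with the single reflection `diag(-1,1,…,1)`; and this holds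
iff `f(x)` depends only on `‖x‖² = ∑ xᵢ²`, i.e. `f(x) = p(‖x‖²)` for a
one-variable polynomial `p`. -/
theorem On_invariance_characterizations (n : ℕ) (hn : 0 < n)
    (f : MvPolynomial (Fin n) ℂ) :
    ((∀ g : Matrix.orthogonalGroup (Fin n) ℝ, ∀ x : Fin n → ℝ,
        eval (fun i => ((Matrix.mulVec (g : Matrix (Fin n) (Fin n) ℝ) x) i : ℂ)) f =
        eval (fun i => (x i : ℂ)) f) ↔
      ((∀ g : Matrix.orthogonalGroup (Fin n) ℝ,
          (g : Matrix (Fin n) (Fin n) ℝ).det = 1 → ∀ x : Fin n → ℝ,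
          eval (fun i => ((Matrix.mulVec (g : Matrix (Fin n) (Fin n) ℝ) x) i : ℂ)) f =
          eval (fun i => (x i : ℂ)) f) ∧
        (∀ x : Fin n → ℝ,
          eval (fun i => ((Matrix.mulVec
              (Matrix.diagonal fun i : Fin n => if i = ⟨0, hn⟩ then (-1 : ℝ) else 1) x) i : ℂ)) f =
          eval (fun i => (x i : ℂ)) f))) ∧
    ((∀ g : Matrix.orthogonalGroup (Fin n) ℝ, ∀ x : Fin n → ℝ,
        eval (fun i => ((Matrix.mulVec (g : Matrix (Fin n) (Fin n) ℝ) x) i : ℂ)) f =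
        eval (fun i => (x i : ℂ)) f) ↔
      ∃ p : Polynomial ℂ, ∀ x : Fin n → ℝ,
        eval (fun i => (x i : ℂ)) f = Polynomial.eval ((∑ i, x i ^ 2 : ℝ) : ℂ) p) := by

  set D : Matrix (Fin n) (Fin n) ℝ :=
    Matrix.diagonal fun i : Fin n => if i = ⟨0, hn⟩ then (-1 : ℝ) else 1 with hD
  have hDmem := refl_mem n hn
  constructor
  · constructor
    · intro h
      exact ⟨fun g _ x => h g x, fun x => h ⟨D, hDmem⟩ x⟩
    · rintro ⟨hSO, hrefl⟩ g x
      have hdet : (g : Matrix (Fin n) (Fin n) ℝ).det = 1 ∨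
          (g : Matrix (Fin n) (Fin n) ℝ).det = -1 := by
        have h1 := (Matrix.mem_orthogonalGroup_iff (n := Fin n) (R := ℝ)).mp g.2
        have h2 : (g : Matrix (Fin n) (Fin n) ℝ).det *
            (g : Matrix (Fin n) (Fin n) ℝ).det = 1 := by
          have := congrArg Matrix.det h1
          rwa [Matrix.det_mul, Matrix.det_one, Matrix.det_transpose] at this
        exact mul_self_eq_one_iff.mp h2
      rcases hdet with hdet | hdet
      · exact hSO g hdet x
      · set g' : Matrix.orthogonalGroup (Fin n) ℝ := g * ⟨D, hDmem⟩ with hg'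
        have hdet' : (g' : Matrix (Fin n) (Fin n) ℝ).det = 1 := by
          rw [hg']
          show ((g : Matrix (Fin n) (Fin n) ℝ) * D).det = 1
          rw [Matrix.det_mul, hdet, refl_det n hn]
          norm_num
        have hvec : Matrix.mulVec (g : Matrix (Fin n) (Fin n) ℝ) x
            = Matrix.mulVec (g' : Matrix (Fin n) (Fin n) ℝ) (Matrix.mulVec D x) := by
          have hmat : (g' : Matrix (Fin n) (Fin n) ℝ) * D = (g : Matrix (Fin n) (Fin n) ℝ) := by
            show (g : Matrix (Fin n) (Fin n) ℝ) * D * D = _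
            rw [mul_assoc, refl_mul_self n hn, mul_one]
          rw [Matrix.mulVec_mulVec, hmat]
        rw [hvec]
        rw [hSO g' hdet' (Matrix.mulVec D x)]
        exact hrefl x
  · constructor
    · intro h
      set q : Polynomial ℂ :=
        MvPolynomial.aeval (fun i : Fin n => if i = ⟨0, hn⟩ then (Polynomial.X : Polynomial ℂ) else 0) f with hq
      have heven : ∀ t : ℝ, q.eval (-t : ℂ) = q.eval (t : ℂ) := by
        intro t
        have hx := h ⟨D, hDmem⟩ (fun i => if i = ⟨0, hn⟩ then t else 0)
        rw [hq, eval_q n hn f, eval_q n hn f]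
        have h1 : (fun i => ((Matrix.mulVec D (fun i => if i = ⟨0, hn⟩ then t else 0)) i : ℂ))
            = fun i : Fin n => if i = ⟨0, hn⟩ then (-t : ℂ) else 0 := by
          funext i
          rw [hD, Matrix.mulVec_diagonal]
          by_cases hi : i = ⟨0, hn⟩ <;> simp [hi]
        have h2 : (fun i : Fin n => ((if i = ⟨0, hn⟩ then t else 0 : ℝ) : ℂ))
            = fun i : Fin n => if i = ⟨0, hn⟩ then (t : ℂ) else 0 := by
          funext i
          by_cases hi : i = ⟨0, hn⟩ <;> simp [hi]
        rw [h1, h2] at hx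
        convert hx using 3
      obtain ⟨p, hp⟩ := even_poly_exists q heven
      refine ⟨p, fun x => ?_⟩
      obtain ⟨g, hg⟩ := exists_orth_to n hn x
      have hx := h g (fun i => if i = ⟨0, hn⟩ then Real.sqrt (∑ i, x i ^ 2) else 0)
      rw [hg] at hx
      rw [hx]
      have h2 : (fun i : Fin n => ((if i = ⟨0, hn⟩ then Real.sqrt (∑ i, x i ^ 2) else 0 : ℝ) : ℂ))
          = fun i : Fin n => if i = ⟨0, hn⟩ then ((Real.sqrt (∑ i, x i ^ 2) : ℝ) : ℂ) else 0 := by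
        funext i
        by_cases hi : i = ⟨0, hn⟩ <;> simp [hi]
      rw [h2, ← eval_q n hn f, ← hq, hp]
      congr 1
      rw [← Complex.ofReal_pow, Real.sq_sqrt]
      positivity
    · rintro ⟨p, hp⟩ g x
      rw [hp, hp]
      congr 2
      exact_mod_cast orth_sum_sq n g x
end

section
/- For n ≥ 1 and d ≥ 0, the space ℂ[ℝⁿ]_d of homogeneous polynomials of degree d decomposes as the direct sum of q·ℂ[ℝⁿ]_{d-2} and the space ℋ^d of harmonic homogeneous polynomials of degree d, where q = ∑x_i². Consequently dim ℋ^d = dim ℂ[ℝⁿ]_d − dim ℂ[ℝⁿ]_{d-2} = C(n+d-1, d) − C(n+d-3, d-2). -/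
open MvPolynomial

/-- The Laplacian `Δ = ∑ ∂²/∂xᵢ²` on `ℂ[x₁,…,xₙ]`. -/
noncomputable def lap (n : ℕ) : MvPolynomial (Fin n) ℂ →ₗ[ℂ] MvPolynomial (Fin n) ℂ :=
  ∑ i : Fin n, ((pderiv i).toLinearMap ∘ₗ (pderiv i).toLinearMap)

/-- The space `ℋᵈ` of harmonic homogeneous polynomials of degree `d`. -/
noncomputable def harm (n d : ℕ) : Submodule ℂ (MvPolynomial (Fin n) ℂ) :=
  homogeneousSubmodule (Fin n) ℂ d ⊓ LinearMap.ker (lap n)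

/-- The submodule `q·ℂ[ℝⁿ]_{d-2}` (zero when `d < 2`), `q = ∑ xᵢ²`. -/
noncomputable def qMul (n d : ℕ) : Submodule ℂ (MvPolynomial (Fin n) ℂ) :=
  if 2 ≤ d then
    (homogeneousSubmodule (Fin n) ℂ (d - 2)).map
      (LinearMap.mulLeft ℂ (∑ i : Fin n, X i ^ 2))
  else ⊥


namespace HarmAux
variable {n : ℕ}

/-- factorial weight -/
def w (α : Fin n →₀ ℕ) : ℕ := ∏ i : Fin n, (α i).factorial

lemma w_pos (α : Fin n →₀ ℕ) : 0 < w α :=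
  Finset.prod_pos fun _ _ => Nat.factorial_pos _

lemma w_add_single (α : Fin n →₀ ℕ) (i : Fin n) :
    w (α + Finsupp.single i 1) = (α i + 1) * w α := by
  unfold w
  rw [← Finset.prod_erase_mul _ _ (Finset.mem_univ i),
      ← Finset.prod_erase_mul _ _ (Finset.mem_univ i)]
  have h1 : ∀ j ∈ Finset.univ.erase i, (((α + Finsupp.single i 1) : (Fin n →₀ ℕ)) j).factorial = (α j).factorial := by
    intro j hj
    have : j ≠ i := (Finset.mem_erase.mp hj).1
    simp [Finsupp.single_apply, this.symm]
  rw [Finset.prod_congr rfl h1]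
  simp [Nat.factorial_succ]
  ring

noncomputable def F (p r : MvPolynomial (Fin n) ℂ) : ℂ :=
  ∑ α ∈ r.support, (starRingEnd ℂ) (p.coeff α) * r.coeff α * (w α : ℂ)

lemma F_eq_sum (p r : MvPolynomial (Fin n) ℂ) (t : Finset (Fin n →₀ ℕ)) (ht : r.support ⊆ t) :
    F p r = ∑ α ∈ t, (starRingEnd ℂ) (p.coeff α) * r.coeff α * (w α : ℂ) := by
  refine Finset.sum_subset ht fun α _ hα => ?_
  rw [MvPolynomial.notMem_support_iff.mp hα]
  ring

lemma F_zero_right (p : MvPolynomial (Fin n) ℂ) : F p 0 = 0 := by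
  simp [F]

lemma F_add_left (p p' r : MvPolynomial (Fin n) ℂ) : F (p + p') r = F p r + F p' r := by
  unfold F
  rw [← Finset.sum_add_distrib]
  refine Finset.sum_congr rfl fun α _ => ?_
  rw [coeff_add, map_add]
  ring

lemma F_add_right (p r r' : MvPolynomial (Fin n) ℂ) : F p (r + r') = F p r + F p r' := by
  rw [F_eq_sum p (r + r') (r.support ∪ r'.support)
       (MvPolynomial.support_add (p := r) (q := r')),
      F_eq_sum p r (r.support ∪ r'.support) Finset.subset_union_left,
      F_eq_sum p r' (r.support ∪ r'.support) Finset.subset_union_right,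
      ← Finset.sum_add_distrib]
  refine Finset.sum_congr rfl fun α _ => ?_
  rw [coeff_add]
  ring

lemma F_monomial_right (p : MvPolynomial (Fin n) ℂ) (β : Fin n →₀ ℕ) (b : ℂ) :
    F p (monomial β b) = (starRingEnd ℂ) (p.coeff β) * b * (w β : ℂ) := by
  rw [F_eq_sum p _ {β} MvPolynomial.support_monomial_subset]
  simp

end HarmAux
namespace HarmAux
variable {n : ℕ}

lemma sub_add_single (β : Fin n →₀ ℕ) (i : Fin n) (h : β i ≠ 0) :
    β - Finsupp.single i 1 + Finsupp.single i 1 = β := by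
  ext j
  simp only [Finsupp.add_apply, Finsupp.tsub_apply, Finsupp.single_apply]
  by_cases hj : i = j
  · subst hj; simp only [eq_self_iff_true, if_true]; omega
  · simp [hj]

lemma key_mono (i : Fin n) (α β : Fin n →₀ ℕ) (a b : ℂ) :
    F (X i * monomial α a) (monomial β b) = F (monomial α a) (pderiv i (monomial β b)) := by
  rw [show (X i : MvPolynomial (Fin n) ℂ) * monomial α a
        = monomial (Finsupp.single i 1 + α) a by
      rw [X, monomial_mul, one_mul],
    pderiv_monomial, F_monomial_right, F_monomial_right, coeff_monomial, coeff_monomial]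
  by_cases h : β i = 0
  · have h1 : ¬ (Finsupp.single i 1 + α = β) := by
      intro hc
      have := congrArg (fun f : Fin n →₀ ℕ => f i) hc
      simp at this
      omega
    simp [h1, h]
  · set γ := β - Finsupp.single i 1 with hγ
    have hβ : γ + Finsupp.single i 1 = β := sub_add_single β i h
    have hcond : (Finsupp.single i 1 + α = β) ↔ (α = γ) := by
      constructor
      · intro hc
        have : α + Finsupp.single i 1 = γ + Finsupp.single i 1 := by
          rw [hβ, ← hc]; exact add_comm _ _
        exact Finsupp.ext fun j => by
          have := congrArg (fun f : Fin n →₀ ℕ => f j) this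
          simpa using this
      · rintro rfl; rw [← hβ]; exact add_comm _ _
    have hw : (w β : ℂ) = (β i : ℂ) * (w γ : ℂ) := by
      have h2 : w β = β i * w γ := by
        conv_lhs => rw [← hβ]
        rw [w_add_single]
        congr 1
        have := congrArg (fun f : Fin n →₀ ℕ => f i) hβ
        simp at this
        omega
      exact_mod_cast congrArg (Nat.cast : ℕ → ℂ) h2
    by_cases hc : α = γ
    · rw [if_pos (hcond.mpr hc), if_pos hc, hw]; ring
    · rw [if_neg (fun hx => hc (hcond.mp hx)), if_neg hc]
      simp

lemma F_X_mul (i : Fin n) (p r : MvPolynomial (Fin n) ℂ) :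
    F (X i * p) r = F p (pderiv i r) := by
  induction r using MvPolynomial.induction_on' with
  | monomial β b =>
    induction p using MvPolynomial.induction_on' with
    | monomial α a => exact key_mono i α β a b
    | add p p' hp hp' => rw [mul_add, F_add_left, F_add_left, hp, hp']
  | add r r' hr hr' => rw [map_add, F_add_right, F_add_right, hr, hr']

end HarmAux
namespace HarmAux
variable {n : ℕ}

lemma F_zero_left (r : MvPolynomial (Fin n) ℂ) : F 0 r = 0 := by
  simp [F]

lemma F_sum_left {ι : Type*} (s : Finset ι) (f : ι → MvPolynomial (Fin n) ℂ)
    (r : MvPolynomial (Fin n) ℂ) : F (∑ i ∈ s, f i) r = ∑ i ∈ s, F (f i) r := by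
  classical
  induction s using Finset.induction_on with
  | empty => simp [F_zero_left]
  | insert _ _ hx ih =>
    rw [Finset.sum_insert hx, Finset.sum_insert hx, F_add_left, ih]

lemma F_sum_right {ι : Type*} (s : Finset ι) (p : MvPolynomial (Fin n) ℂ)
    (f : ι → MvPolynomial (Fin n) ℂ) : F p (∑ i ∈ s, f i) = ∑ i ∈ s, F p (f i) := by
  classical
  induction s using Finset.induction_on with
  | empty => simp [F_zero_right]
  | insert _ _ hx ih =>
    rw [Finset.sum_insert hx, Finset.sum_insert hx, F_add_right, ih]

lemma lap_apply (r : MvPolynomial (Fin n) ℂ) :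
    lap n r = ∑ i : Fin n, pderiv i (pderiv i r) := by
  simp [lap, LinearMap.sum_apply, LinearMap.comp_apply]

lemma F_q_mul (p r : MvPolynomial (Fin n) ℂ) :
    F ((∑ i : Fin n, X i ^ 2) * p) r = F p (lap n r) := by
  rw [Finset.sum_mul, F_sum_left, lap_apply, F_sum_right]
  refine Finset.sum_congr rfl fun i _ => ?_
  rw [show (X i : MvPolynomial (Fin n) ℂ) ^ 2 * p = X i * (X i * p) by ring,
    F_X_mul, F_X_mul]

lemma eq_zero_of_F_self (p : MvPolynomial (Fin n) ℂ) (h : F p p = 0) : p = 0 := by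
  have hF : F p p = ((∑ α ∈ p.support, Complex.normSq (p.coeff α) * (w α : ℝ) : ℝ) : ℂ) := by
    rw [F, Complex.ofReal_sum]
    refine Finset.sum_congr rfl fun α _ => ?_
    rw [Complex.ofReal_mul, ← Complex.normSq_eq_conj_mul_self]
    push_cast
    ring
  rw [hF] at h
  have h0 : (∑ α ∈ p.support, Complex.normSq (p.coeff α) * (w α : ℝ)) = 0 :=
    Complex.ofReal_eq_zero.mp h
  have hall : ∀ α ∈ p.support, Complex.normSq (p.coeff α) * (w α : ℝ) = 0 := by
    refine (Finset.sum_eq_zero_iff_of_nonneg fun α _ => ?_).mp h0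
    exact mul_nonneg (Complex.normSq_nonneg _) (Nat.cast_nonneg _)
  ext m
  by_cases hm : m ∈ p.support
  · have := hall m hm
    have hw : (w m : ℝ) ≠ 0 := Nat.cast_ne_zero.mpr (w_pos m).ne'
    have : Complex.normSq (p.coeff m) = 0 := by
      rcases mul_eq_zero.mp this with h' | h'
      · exact h'
      · exact absurd h' hw
    simpa [coeff_zero] using Complex.normSq_eq_zero.mp this
  · simp [MvPolynomial.notMem_support_iff.mp hm]

end HarmAux
namespace HarmAux
variable {n : ℕ}

lemma degree_eq_sum_univ (α : Fin n →₀ ℕ) : α.degree = ∑ i : Fin n, α i :=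
  Finset.sum_subset (Finset.subset_univ _)
    (fun i _ h => Finsupp.notMem_support_iff.mp h)

lemma degree_add (α β : Fin n →₀ ℕ) : (α + β).degree = α.degree + β.degree := by
  simp [degree_eq_sum_univ, Finset.sum_add_distrib]

lemma degree_single (i : Fin n) (k : ℕ) : (Finsupp.single i k).degree = k := by
  rw [degree_eq_sum_univ]
  simp [Finsupp.single_apply]

lemma q_isHomogeneous : ((∑ i : Fin n, X i ^ 2 : MvPolynomial (Fin n) ℂ)).IsHomogeneous 2 :=
  MvPolynomial.IsHomogeneous.sum _ _ _ fun i _ => isHomogeneous_X_pow i 2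

lemma pderiv_isHomogeneous {p : MvPolynomial (Fin n) ℂ} {m : ℕ}
    (h : p.IsHomogeneous m) (i : Fin n) : (pderiv i p).IsHomogeneous (m - 1) := by
  conv_lhs => rw [← p.support_sum_monomial_coeff]
  rw [map_sum]
  refine MvPolynomial.IsHomogeneous.sum _ _ _ fun v hv => ?_
  rw [pderiv_monomial]
  by_cases hvi : v i = 0
  · rw [hvi]
    simp only [Nat.cast_zero, mul_zero, map_zero]
    exact (homogeneousSubmodule (Fin n) ℂ (m - 1)).zero_mem
  · refine isHomogeneous_monomial _ ?_
    have hdeg : v.degree = m := by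
      rw [Finsupp.degree_eq_weight_one]; exact h (MvPolynomial.mem_support_iff.mp hv)
    have h1 : (v - Finsupp.single i 1) + Finsupp.single i 1 = v := sub_add_single v i hvi
    have := congrArg Finsupp.degree h1
    rw [degree_add, degree_single, hdeg] at this
    omega

lemma lap_isHomogeneous {p : MvPolynomial (Fin n) ℂ} {d : ℕ}
    (h : p.IsHomogeneous d) : ((lap n) p).IsHomogeneous (d - 2) := by
  rw [lap_apply]
  refine MvPolynomial.IsHomogeneous.sum _ _ _ fun i _ => ?_
  have := pderiv_isHomogeneous (pderiv_isHomogeneous h i) i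
  rwa [Nat.sub_sub] at this

lemma pderiv_eq_zero_of_isHomogeneous_zero {p : MvPolynomial (Fin n) ℂ}
    (h : p.IsHomogeneous 0) (i : Fin n) : pderiv i p = 0 := by
  have hp : p = C (p.coeff 0) := by
    ext m
    by_cases hm : m = 0
    · subst hm; simp
    · rw [coeff_C, if_neg (Ne.symm hm)]
      exact h.coeff_eq_zero (by simpa [Finsupp.degree_eq_zero_iff] using hm)
  rw [hp]
  exact pderiv_C

lemma lap_eq_zero_of_low {p : MvPolynomial (Fin n) ℂ} {d : ℕ} (hd : d ≤ 1)
    (h : p.IsHomogeneous d) : lap n p = 0 := by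
  rw [lap_apply]
  refine Finset.sum_eq_zero fun i _ => ?_
  interval_cases d
  · simp [pderiv_eq_zero_of_isHomogeneous_zero h i]
  · simp [pderiv_eq_zero_of_isHomogeneous_zero
      (by simpa using pderiv_isHomogeneous h i) i]

lemma disjoint_qMul_harm (d : ℕ) : Disjoint (qMul n d) (harm n d) := by
  unfold qMul
  split_ifs with hd
  · rw [Submodule.disjoint_def]
    rintro x hx hharm
    obtain ⟨g, -, rfl⟩ := hx
    have hker : lap n (LinearMap.mulLeft ℂ (∑ i : Fin n, X i ^ 2) g) = 0 :=
      LinearMap.mem_ker.mp hharm.2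
    refine eq_zero_of_F_self _ ?_
    rw [LinearMap.mulLeft_apply] at hker ⊢
    rw [F_q_mul, hker, F_zero_right]
  · exact disjoint_bot_left
end HarmAux
namespace HarmAux
variable {n : ℕ}

lemma degree_eq_sum_id (f : Fin n →₀ ℕ) : f.degree = f.sum fun _ => id := rfl

noncomputable def degreeEquivSym (n d : ℕ) :
    {α : Fin n →₀ ℕ // α.degree = d} ≃ Sym (Fin n) d where
  toFun a := ⟨Finsupp.toMultiset a.1, by
    rw [Finsupp.card_toMultiset, ← degree_eq_sum_id]; exact a.2⟩
  invFun s := ⟨Multiset.toFinsupp (s : Multiset (Fin n)), by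
    rw [degree_eq_sum_id, Multiset.toFinsupp_sum_eq]; exact s.2⟩
  left_inv a := Subtype.ext (Finsupp.toMultiset_toFinsupp a.1)
  right_inv s := Sym.ext (by
    simp only [Multiset.toFinsupp_toMultiset]
    rfl)

noncomputable instance (n d : ℕ) : Fintype {α : Fin n →₀ ℕ // α.degree = d} :=
  Fintype.ofEquiv _ (degreeEquivSym n d).symm

lemma card_degree_subtype (n d : ℕ) :
    Fintype.card {α : Fin n →₀ ℕ // α.degree = d} = (n + d - 1).choose d := by
  rw [Fintype.card_congr (degreeEquivSym n d), Sym.card_sym_eq_choose, Fintype.card_fin]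

noncomputable def setEquiv (n d : ℕ) :
    {α : Fin n →₀ ℕ // α.degree = d} ≃ ↥{α : Fin n →₀ ℕ | α.degree = d} :=
  Equiv.subtypeEquivRight (fun α => by simp)

noncomputable instance (n d : ℕ) : Fintype ↥{α : Fin n →₀ ℕ | α.degree = d} :=
  Fintype.ofEquiv _ ((degreeEquivSym n d).symm.trans (setEquiv n d))

lemma homog_eq_restrict (n d : ℕ) :
    homogeneousSubmodule (Fin n) ℂ d = restrictSupport ℂ {α : Fin n →₀ ℕ | α.degree = d} :=
  by rw [homogeneousSubmodule_eq_finsupp_supported]; rfl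

instance homog_finiteDimensional (n d : ℕ) :
    FiniteDimensional ℂ (homogeneousSubmodule (Fin n) ℂ d) := by
  rw [homog_eq_restrict]
  exact Module.Finite.of_basis (basisRestrictSupport ℂ {α : Fin n →₀ ℕ | α.degree = d})

lemma finrank_homog (n d : ℕ) :
    Module.finrank ℂ (homogeneousSubmodule (Fin n) ℂ d) = (n + d - 1).choose d := by
  rw [homog_eq_restrict]
  rw [Module.finrank_eq_card_basis (basisRestrictSupport ℂ {α : Fin n →₀ ℕ | α.degree = d})]
  rw [← Fintype.card_congr (setEquiv n d)]
  exact card_degree_subtype n d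

end HarmAux
namespace HarmAux
variable {n : ℕ}

lemma q_ne_zero (hn : 1 ≤ n) : (∑ i : Fin n, X i ^ 2 : MvPolynomial (Fin n) ℂ) ≠ 0 := by
  intro h
  have h2 := congrArg (eval (fun _ => (1 : ℂ))) h
  simp at h2
  omega

lemma qMul_le_homog (d : ℕ) : qMul n d ≤ homogeneousSubmodule (Fin n) ℂ d := by
  unfold qMul
  split_ifs with hd
  · rintro x ⟨g, hg, rfl⟩
    rw [LinearMap.mulLeft_apply]
    have := q_isHomogeneous.mul (hg : MvPolynomial.IsHomogeneous g (d - 2))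
    rwa [show 2 + (d - 2) = d by omega] at this
  · exact bot_le

lemma finrank_qMul (hd : 2 ≤ d) (hn : 1 ≤ n) :
    Module.finrank ℂ (qMul n d) = (n + d - 3).choose (d - 2) := by
  have hinj : Function.Injective (LinearMap.mulLeft ℂ (∑ i : Fin n, X i ^ 2)
      : MvPolynomial (Fin n) ℂ →ₗ[ℂ] MvPolynomial (Fin n) ℂ) := by
    intro a b hab
    exact mul_left_cancel₀ (q_ne_zero hn)
      (by simpa [LinearMap.mulLeft_apply] using hab)
  unfold qMul
  rw [if_pos hd,
    ← LinearEquiv.finrank_eq (Submodule.equivMapOfInjective _ hinj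
        (homogeneousSubmodule (Fin n) ℂ (d - 2))),
    finrank_homog, show n + (d - 2) - 1 = n + d - 3 by omega]

end HarmAux

theorem homogeneous_decomposition' (n d : ℕ) (hn : 1 ≤ n) :
    homogeneousSubmodule (Fin n) ℂ d = qMul n d ⊔ harm n d ∧
    Disjoint (qMul n d) (harm n d) ∧
    Module.finrank ℂ (harm n d) =
      Module.finrank ℂ (homogeneousSubmodule (Fin n) ℂ d) - Module.finrank ℂ (qMul n d) ∧
    Module.finrank ℂ (harm n d) =
      (n + d - 1).choose d - (if 2 ≤ d then (n + d - 3).choose (d - 2) else 0) := by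
  classical
  have hdisj := HarmAux.disjoint_qMul_harm (n := n) d
  by_cases hd : 2 ≤ d
  · set T := homogeneousSubmodule (Fin n) ℂ d with hT
    set L := (lap n).domRestrict T with hL
    have hrange : LinearMap.range L ≤ homogeneousSubmodule (Fin n) ℂ (d - 2) := by
      rintro x ⟨⟨p, hp⟩, rfl⟩
      exact HarmAux.lap_isHomogeneous hp
    have hrk : Module.finrank ℂ (LinearMap.range L)
        ≤ Module.finrank ℂ (homogeneousSubmodule (Fin n) ℂ (d - 2)) :=
      Submodule.finrank_mono hrange
    have hrn := LinearMap.finrank_range_add_finrank_ker L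
    have hker : Module.finrank ℂ (LinearMap.ker L) = Module.finrank ℂ (harm n d) := by
      have h1 : Submodule.map T.subtype (LinearMap.ker L) = harm n d := by
        rw [LinearMap.ker_domRestrict, Submodule.map_comap_subtype]
        rfl
      rw [← h1, Submodule.finrank_map_subtype_eq]
    have hqrk := HarmAux.finrank_qMul hd hn
    haveI : FiniteDimensional ℂ (qMul n d) :=
      Submodule.finiteDimensional_of_le (HarmAux.qMul_le_homog d)
    haveI : FiniteDimensional ℂ (harm n d) :=
      Submodule.finiteDimensional_of_le (inf_le_left : harm n d ≤ T)
    have hsupinf := Submodule.finrank_sup_add_finrank_inf_eq (qMul n d) (harm n d)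
    rw [hdisj.eq_bot, finrank_bot] at hsupinf
    have hle : qMul n d ⊔ harm n d ≤ T :=
      sup_le (HarmAux.qMul_le_homog d) inf_le_left
    have hhd2 := HarmAux.finrank_homog n (d - 2)
    have hch : (n + (d - 2) - 1).choose (d - 2) = (n + d - 3).choose (d - 2) := by
      rw [show n + (d - 2) - 1 = n + d - 3 by omega]
    have hdim : Module.finrank ℂ T ≤ Module.finrank ℂ (qMul n d ⊔ harm n d : Submodule ℂ _) := by
      omega
    have heq : T = qMul n d ⊔ harm n d :=
      (Submodule.eq_of_le_of_finrank_le hle hdim).symm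
    have hfr : Module.finrank ℂ T = Module.finrank ℂ (qMul n d ⊔ harm n d : Submodule ℂ _) := by
      rw [← heq]
    refine ⟨heq, hdisj, by omega, ?_⟩
    rw [if_pos hd, ← hqrk, ← HarmAux.finrank_homog n d, ← hT]
    omega
  · have hq : qMul n d = ⊥ := by unfold qMul; rw [if_neg hd]
    have hharm : harm n d = homogeneousSubmodule (Fin n) ℂ d := by
      unfold harm
      rw [inf_eq_left]
      intro p hp
      exact LinearMap.mem_ker.mpr (HarmAux.lap_eq_zero_of_low (by omega) hp)
    refine ⟨by rw [hq, hharm, bot_sup_eq], hdisj, ?_, ?_⟩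
    · rw [hq, hharm, finrank_bot]
      omega
    · rw [hharm, HarmAux.finrank_homog, if_neg hd]
      omega

/-- For `n ≥ 1` and any `d`, the homogeneous polynomials of degree `d`
decompose as the direct sum of `q·ℂ[ℝⁿ]_{d-2}` and the harmonic homogeneous
polynomials of degree `d`; consequently
`dim ℋᵈ = C(n+d-1, d) − C(n+d-3, d-2)` (the second term read as `0` if `d < 2`). -/
theorem homogeneous_decomposition (n d : ℕ) (hn : 1 ≤ n) :
    homogeneousSubmodule (Fin n) ℂ d = qMul n d ⊔ harm n d ∧
    Disjoint (qMul n d) (harm n d) ∧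
    Module.finrank ℂ (harm n d) =
      Module.finrank ℂ (homogeneousSubmodule (Fin n) ℂ d) - Module.finrank ℂ (qMul n d) ∧
    Module.finrank ℂ (harm n d) =
      (n + d - 1).choose d - (if 2 ≤ d then (n + d - 3).choose (d - 2) else 0) :=
  homogeneous_decomposition' n d hn
end

section
/- Every polynomial f on ℝⁿ (n ≥ 1) can be written uniquely as a finite sum f = ∑_{j≥0} q^j h_j where each h_j is a harmonic polynomial and q = ∑ x_i²; i.e., ℂ[ℝⁿ] = ⊕_{j≥0} q^j · ℋ[ℝⁿ] where ℋ[ℝⁿ] is the space of harmonic polynomials. -/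
open MvPolynomial

namespace HD

variable {n : ℕ}

abbrev R (n : ℕ) := MvPolynomial (Fin n) ℂ

noncomputable def q (n : ℕ) : R n := ∑ i : Fin n, X i ^ 2

lemma lap_apply (p : R n) : lap n p = ∑ i : Fin n, pderiv i (pderiv i p) := by
  simp [lap, LinearMap.sum_apply]

lemma coeff_pderiv (i : Fin n) (f : R n) (m : Fin n →₀ ℕ) :
    coeff m (pderiv i f) = ((m i : ℂ) + 1) * coeff (m + Finsupp.single i 1) f := by
  induction f using MvPolynomial.induction_on' with
  | add p q hp hq => simp [hp, hq, mul_add]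
  | monomial s a =>
    rw [pderiv_monomial, coeff_monomial, coeff_monomial]
    by_cases h : s = m + Finsupp.single i 1
    · subst h
      rw [if_pos (add_tsub_cancel_right _ _)]
      simp only [Finsupp.add_apply, Finsupp.single_eq_same]
      push_cast
      ring
    · rw [if_neg h]
      split_ifs with h2
      · have hsi : s i = 0 := by
          by_contra hsi
          apply h
          have : Finsupp.single i 1 ≤ s := by
            rw [Finsupp.single_le_iff]; omega
          rw [← h2, tsub_add_cancel_of_le this]
        simp [hsi]
      · simp


lemma sum_add_single (m : Fin n →₀ ℕ) (i : Fin n) :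
    ((m + Finsupp.single i 1).sum fun _ e => e) = (m.sum fun _ e => e) + 1 := by
  rw [Finsupp.sum_add_index' (fun _ => rfl) (fun _ _ _ => rfl),
    Finsupp.sum_single_index rfl]

lemma totalDegree_pderiv_le (i : Fin n) (f : R n) (m : ℕ)
    (hf : f.totalDegree ≤ m + 1) : (pderiv i f).totalDegree ≤ m := by
  apply Finset.sup_le
  intro s hs
  rw [mem_support_iff, coeff_pderiv] at hs
  have h2 : coeff (s + Finsupp.single i 1) f ≠ 0 := by
    intro h; rw [h, mul_zero] at hs; exact hs rfl
  have := le_totalDegree (p := f) (mem_support_iff.2 h2)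
  have := sum_add_single s i
  omega

lemma totalDegree_q_mul_le (g : R n) (m : ℕ) (hg : g.totalDegree ≤ m) :
    (q n * g).totalDegree ≤ m + 2 := by
  have h1 : (q n).totalDegree ≤ 2 := by
    apply (totalDegree_finset_sum _ _).trans
    apply Finset.sup_le
    intro i _
    calc (X i ^ 2 : R n).totalDegree ≤ 2 * (X i : R n).totalDegree := totalDegree_pow _ _
    _ ≤ 2 := by rw [totalDegree_X]
  calc (q n * g).totalDegree ≤ (q n).totalDegree + g.totalDegree := totalDegree_mul _ _
  _ ≤ m + 2 := by omega

lemma totalDegree_lap_le (f : R n) (m : ℕ) (hf : f.totalDegree ≤ m + 2) :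
    (lap n f).totalDegree ≤ m := by
  rw [lap_apply]
  apply (totalDegree_finset_sum _ _).trans
  apply Finset.sup_le
  intro i _
  exact totalDegree_pderiv_le i _ m (totalDegree_pderiv_le i f (m+1) hf)

lemma lap_eq_zero_of_le_one (f : R n) (hf : f.totalDegree ≤ 1) : lap n f = 0 := by
  rw [lap_apply]
  apply Finset.sum_eq_zero
  intro i _
  rw [MvPolynomial.eq_zero_iff]
  intro d
  rw [coeff_pderiv, coeff_pderiv]
  have h2 : coeff (d + Finsupp.single i 1 + Finsupp.single i 1) f = 0 := by
    by_contra h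
    have := le_totalDegree (p := f) (mem_support_iff.2 h)
    rw [sum_add_single, sum_add_single] at this
    omega
  rw [h2, mul_zero, mul_zero]


open Complex in
noncomputable def w (α : Fin n →₀ ℕ) : ℕ := ∏ j : Fin n, (α j).factorial

lemma w_pos (α : Fin n →₀ ℕ) : 0 < w α :=
  Finset.prod_pos fun j _ => Nat.factorial_pos _

lemma w_succ (γ : Fin n →₀ ℕ) (i : Fin n) (h : γ i ≠ 0) :
    w γ = γ i * w (γ - Finsupp.single i 1) := by
  unfold w
  rw [← Finset.mul_prod_erase _ _ (Finset.mem_univ i),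
      ← Finset.mul_prod_erase _ _ (Finset.mem_univ i), ← mul_assoc]
  congr 1
  · rw [Finsupp.tsub_apply, Finsupp.single_eq_same,
      ← Nat.mul_factorial_pred h]
  · apply Finset.prod_congr rfl
    intro j hj
    rw [Finsupp.tsub_apply, Finsupp.single_eq_of_ne'
      (fun he => (Finset.mem_erase.1 hj).1 he.symm), Nat.sub_zero]

noncomputable def B (p r : R n) : ℂ :=
  ∑ α ∈ r.support, (w α : ℂ) * (starRingEnd ℂ) (coeff α p) * coeff α r

lemma B_eq_sum (p r : R n) (S : Finset (Fin n →₀ ℕ)) (hS : r.support ⊆ S) :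
    B p r = ∑ α ∈ S, (w α : ℂ) * (starRingEnd ℂ) (coeff α p) * coeff α r := by
  apply Finset.sum_subset hS
  intro α _ hα
  rw [notMem_support_iff.1 hα, mul_zero]

lemma B_zero_right (p : R n) : B p 0 = 0 := by simp [B]

lemma B_add_right (p r1 r2 : R n) : B p (r1 + r2) = B p r1 + B p r2 := by
  rw [B_eq_sum p (r1 + r2) (r1.support ∪ r2.support) (support_add),
    B_eq_sum p r1 (r1.support ∪ r2.support) Finset.subset_union_left,
    B_eq_sum p r2 (r1.support ∪ r2.support) Finset.subset_union_right,
    ← Finset.sum_add_distrib]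
  apply Finset.sum_congr rfl
  intro α _
  rw [coeff_add]
  ring

lemma B_add_left (p1 p2 r : R n) : B (p1 + p2) r = B p1 r + B p2 r := by
  unfold B
  rw [← Finset.sum_add_distrib]
  apply Finset.sum_congr rfl
  intro α _
  rw [coeff_add, map_add]
  ring

lemma B_sum_left {ι : Type*} [DecidableEq ι] (s : Finset ι) (g : ι → R n) (r : R n) :
    B (∑ i ∈ s, g i) r = ∑ i ∈ s, B (g i) r := by
  induction s using Finset.induction_on with
  | empty => simp [B]
  | insert a s h ih => rw [Finset.sum_insert h, Finset.sum_insert h, B_add_left, ih]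

lemma B_sum_right {ι : Type*} [DecidableEq ι] (s : Finset ι) (g : ι → R n) (p : R n) :
    B p (∑ i ∈ s, g i) = ∑ i ∈ s, B p (g i) := by
  induction s using Finset.induction_on with
  | empty => simp [B_zero_right]
  | insert a s h ih => rw [Finset.sum_insert h, Finset.sum_insert h, B_add_right, ih]

lemma B_monomial_right (p : R n) (γ : Fin n →₀ ℕ) (c : ℂ) :
    B p (monomial γ c) = (w γ : ℂ) * (starRingEnd ℂ) (coeff γ p) * c := by
  by_cases hc : c = 0
  · simp [hc, B_zero_right]
  · rw [B_eq_sum p _ {γ} (by rw [support_monomial, if_neg hc]),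
      Finset.sum_singleton, coeff_monomial, if_pos rfl]

lemma B_X_mul (i : Fin n) (p r : R n) : B (X i * p) r = B p (pderiv i r) := by
  induction r using MvPolynomial.induction_on' with
  | add r1 r2 h1 h2 => rw [B_add_right, map_add, B_add_right, h1, h2]
  | monomial γ c =>
    rw [B_monomial_right, pderiv_monomial, B_monomial_right]
    by_cases h : γ i = 0
    · have : coeff γ (X i * p) = 0 := by
        rw [coeff_X_mul', if_neg (by simp [Finsupp.mem_support_iff, h])]
      rw [this, h]
      simp
    · rw [coeff_X_mul', if_pos (Finsupp.mem_support_iff.2 h),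
        w_succ γ i h]
      push_cast
      ring

lemma B_q_mul (p r : R n) : B (q n * p) r = B p (lap n r) := by
  rw [q, Finset.sum_mul, B_sum_left, lap_apply, B_sum_right]
  apply Finset.sum_congr rfl
  intro i _
  rw [pow_two, mul_assoc, B_X_mul, B_X_mul]

lemma B_self_eq_zero (p : R n) (h : B p p = 0) : p = 0 := by
  by_contra hp
  have hcast : B p p = ((∑ α ∈ p.support, (w α : ℝ) * Complex.normSq (coeff α p) : ℝ) : ℂ) := by
    unfold B
    push_cast
    apply Finset.sum_congr rfl
    intro α _
    rw [mul_assoc]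
    congr 1
    rw [mul_comm, Complex.mul_conj]
  rw [hcast] at h
  have hsum : (∑ α ∈ p.support, (w α : ℝ) * Complex.normSq (coeff α p)) = 0 := by
    exact_mod_cast h
  clear h hcast
  have hpos : 0 < ∑ α ∈ p.support, (w α : ℝ) * Complex.normSq (coeff α p) := by
    apply Finset.sum_pos
    · intro α hα
      apply mul_pos
      · exact_mod_cast w_pos α
      · exact Complex.normSq_pos.2 (mem_support_iff.1 hα)
    · exact support_nonempty.2 hp
  linarith


lemma q_ne_zero (hn : 1 ≤ n) : q n ≠ 0 := by
  intro h
  have := congrArg (eval fun _ => (1 : ℂ)) h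
  rw [q] at this
  simp only [map_sum, eval_X, one_pow, eval_pow, Finset.sum_const, Finset.card_univ,
    Fintype.card_fin, nsmul_eq_mul, mul_one, map_zero] at this
  have : (n : ℂ) ≠ 0 := Nat.cast_ne_zero.2 (by omega)
  simp_all

lemma eq_zero_of_lap_q_mul (hn : 1 ≤ n) (g : R n) (h : lap n (q n * g) = 0) : g = 0 := by
  have h1 : B (q n * g) (q n * g) = 0 := by
    rw [B_q_mul, h, B_zero_right]
  have h2 := B_self_eq_zero _ h1
  rcases mul_eq_zero.1 h2 with h3 | h3
  · exact absurd h3 (q_ne_zero hn)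
  · exact h3

lemma exists_preimage (hn : 1 ≤ n) (m : ℕ) (r : R n) (hr : r.totalDegree ≤ m) :
    ∃ g : R n, g.totalDegree ≤ m ∧ lap n (q n * g) = r := by
  set V := restrictTotalDegree (Fin n) ℂ m with hV
  have hmaps : ∀ x ∈ V, lap n (q n * x) ∈ V := by
    intro x hx
    rw [hV, mem_restrictTotalDegree] at hx ⊢
    exact totalDegree_lap_le _ _ (totalDegree_q_mul_le _ _ hx)
  let T : V →ₗ[ℂ] V :=
    ((lap n).comp (LinearMap.mulLeft ℂ (q n))).restrict hmaps
  have hinj : Function.Injective T := by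
    rw [injective_iff_map_eq_zero]
    intro x hx
    have : lap n (q n * (x : R n)) = 0 := by
      have := congrArg (Subtype.val) hx
      exact this
    have := eq_zero_of_lap_q_mul hn _ this
    exact Subtype.ext this
  have hsurj : Function.Surjective T := (LinearMap.injective_iff_surjective).1 hinj
  obtain ⟨g, hg⟩ := hsurj ⟨r, (mem_restrictTotalDegree _ _ _).2 hr⟩
  refine ⟨(g : R n), (mem_restrictTotalDegree _ _ _).1 g.2, ?_⟩
  have := congrArg (Subtype.val) hg
  exact this


noncomputable def F (n : ℕ) : ℕ → R n → R n := fun j c => q n ^ j * c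

lemma sum_decomp (h0 : R n) (h' : ℕ →₀ R n) :
    (Finsupp.single 0 h0 + Finsupp.mapDomain Nat.succ h').sum (F n)
      = h0 + q n * h'.sum (F n) := by
  unfold F
  rw [Finsupp.sum_add_index' (fun j => mul_zero _) (fun j b1 b2 => mul_add _ _ _),
    Finsupp.sum_single_index (h := fun j c => q n ^ j * c) (mul_zero _),
    Finsupp.sum_mapDomain_index (fun j => mul_zero _) (fun j b1 b2 => mul_add _ _ _),
    Finsupp.mul_sum]
  rw [pow_zero, one_mul]
  congr 1
  apply Finsupp.sum_congr
  intro j _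
  rw [pow_succ, mul_comm (q n ^ j) (q n), mul_assoc]

lemma decomp_apply_zero (h0 : R n) (h' : ℕ →₀ R n) :
    (Finsupp.single 0 h0 + Finsupp.mapDomain Nat.succ h' : ℕ →₀ R n) 0 = h0 := by
  rw [Finsupp.add_apply, Finsupp.single_eq_same,
    Finsupp.mapDomain_notin_range _ _ (by simp [Set.range, Nat.succ_ne_zero]), add_zero]

lemma decomp_apply_succ (h0 : R n) (h' : ℕ →₀ R n) (j : ℕ) :
    (Finsupp.single 0 h0 + Finsupp.mapDomain Nat.succ h' : ℕ →₀ R n) (j + 1) = h' j := by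
  rw [Finsupp.add_apply, Finsupp.single_eq_of_ne' (Nat.succ_ne_zero j).symm,
    Finsupp.mapDomain_apply Nat.succ_injective, zero_add]

lemma existence (hn : 1 ≤ n) : ∀ m : ℕ, ∀ f : R n, f.totalDegree ≤ m →
    ∃ h : ℕ →₀ R n, (∀ j, lap n (h j) = 0) ∧ f = h.sum (F n) := by
  intro m
  induction m using Nat.strong_induction_on with
  | _ m ih =>
    intro f hf
    rcases le_or_gt m 1 with hm | hm
    · refine ⟨Finsupp.single 0 f, ?_, ?_⟩
      · intro j
        rcases eq_or_ne j 0 with rfl | hj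
        · rw [Finsupp.single_eq_same]
          exact lap_eq_zero_of_le_one f (hf.trans hm)
        · rw [Finsupp.single_eq_of_ne' (Ne.symm hj), map_zero]
      · unfold F
        rw [Finsupp.sum_single_index (h := fun j c => q n ^ j * c) (mul_zero _), pow_zero, one_mul]
    · have hm2 : m - 2 < m := by omega
      have hlapf : (lap n f).totalDegree ≤ m - 2 :=
        totalDegree_lap_le f (m - 2) (by omega : f.totalDegree ≤ m - 2 + 2)
      obtain ⟨g, hgdeg, hglap⟩ := exists_preimage hn (m - 2) (lap n f) hlapf
      obtain ⟨h', hh'harm, hh'sum⟩ := ih (m - 2) hm2 g hgdeg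
      refine ⟨Finsupp.single 0 (f - q n * g) + Finsupp.mapDomain Nat.succ h', ?_, ?_⟩
      · intro j
        rcases j with _ | j
        · rw [decomp_apply_zero, map_sub, hglap, sub_self]
        · rw [decomp_apply_succ]
          exact hh'harm j
      · rw [sum_decomp, ← hh'sum]
        ring

lemma uniq_zero (hn : 1 ≤ n) : ∀ N : ℕ, ∀ h : ℕ →₀ R n, (∀ j, N ≤ j → h j = 0) →
    (∀ j, lap n (h j) = 0) → h.sum (F n) = 0 → h = 0 := by
  intro N
  induction N with
  | zero =>
    intro h hN _ _
    exact Finsupp.ext fun j => hN j (Nat.zero_le j)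
  | succ N ih =>
    intro h hN hharm hsum
    set g : ℕ →₀ R n := Finsupp.comapDomain Nat.succ h
      (Nat.succ_injective.injOn) with hg
    have hgapp : ∀ j, g j = h (j + 1) := fun j => rfl
    have hdecomp : h = Finsupp.single 0 (h 0) + Finsupp.mapDomain Nat.succ g := by
      ext j
      rcases j with _ | j
      · rw [decomp_apply_zero]
      · rw [decomp_apply_succ, hgapp]
    have hsum2 : h 0 + q n * g.sum (F n) = 0 := by
      rw [← sum_decomp, ← hdecomp, hsum]
    have hlapqg : lap n (q n * g.sum (F n)) = 0 := by
      have h0eq : q n * g.sum (F n) = -(h 0) := by linear_combination hsum2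
      rw [h0eq, map_neg, hharm 0, neg_zero]
    have hS : g.sum (F n) = 0 := eq_zero_of_lap_q_mul hn _ hlapqg
    have hg0 : g = 0 := by
      apply ih g
      · intro j hj
        rw [hgapp]
        exact hN (j + 1) (by omega)
      · intro j
        rw [hgapp]
        exact hharm (j + 1)
      · exact hS
    have h00 : h 0 = 0 := by
      rw [hS, mul_zero, add_zero] at hsum2
      exact hsum2
    rw [hdecomp, h00, hg0, Finsupp.single_zero, Finsupp.mapDomain_zero, add_zero]

end HD


/-- Every polynomial `f` on `ℝⁿ` (`n ≥ 1`) is uniquely a finite sum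
`f = ∑ⱼ qʲ hⱼ` with each `hⱼ` harmonic, where `q = ∑ xᵢ²`;
i.e. `ℂ[ℝⁿ] = ⊕ⱼ qʲ·ℋ[ℝⁿ]`. -/
theorem harmonic_decomposition (n : ℕ) (hn : 1 ≤ n) (f : MvPolynomial (Fin n) ℂ) :
    ∃! h : ℕ →₀ MvPolynomial (Fin n) ℂ,
      (∀ j, lap n (h j) = 0) ∧
      f = h.sum fun j hj => (∑ i : Fin n, X i ^ 2) ^ j * hj := by

  have hq : (∑ i : Fin n, X i ^ 2 : MvPolynomial (Fin n) ℂ) = HD.q n := rfl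
  obtain ⟨h, hharm, hsum⟩ := HD.existence hn f.totalDegree f le_rfl
  refine ⟨h, ⟨hharm, by rw [hq]; exact hsum⟩, ?_⟩
  rintro y ⟨hyharm, hysum⟩
  rw [hq] at hysum
  have hd : y - h = 0 := by
    apply HD.uniq_zero hn (((y - h).support.sup id) + 1)
    · intro j hj
      by_contra hne
      have : j ∈ (y - h).support := Finsupp.mem_support_iff.2 hne
      have := Finset.le_sup (f := id) this
      simp only [id] at this
      omega
    · intro j
      rw [Finsupp.sub_apply, map_sub, hyharm, hharm, sub_zero]
    · show (y - h).sum (fun j c => HD.q n ^ j * c) = 0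
      have h1 : h.sum (fun j c => HD.q n ^ j * c) = h.sum (HD.F n) := rfl
      have h2 : y.sum (fun j c => HD.q n ^ j * c) = y.sum (HD.F n) := rfl
      rw [Finsupp.sum_sub_index (fun j b1 b2 => mul_sub _ _ _), h1, h2, ← hsum,
        show y.sum (HD.F n) = f from hysum.symm, sub_self]
  linear_combination (norm := abel) hd
end

section
/- (Conservation relation for the determinant character) The first occurrence index of the determinant character of O(n) equals n: the one-dimensional representation det of O(n) does not occur in ℂ[ℝ^{n×k}] for k < n, but occurs in ℂ[ℝ^{n×n}]. -/
open MvPolynomial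

/-- A nonzero polynomial `f` on `n×k` real matrices transforming by the
determinant character of `O(n)`: `f(gx) = det(g)·f(x)`. -/
def DetOccurs (n k : ℕ) : Prop :=
  ∃ f : MvPolynomial (Fin n × Fin k) ℂ, f ≠ 0 ∧
    ∀ (g : Matrix.orthogonalGroup (Fin n) ℝ) (x : Matrix (Fin n) (Fin k) ℝ),
      eval (fun p : Fin n × Fin k =>
          ((((g : Matrix (Fin n) (Fin n) ℝ) * x) p.1 p.2 : ℝ) : ℂ)) f =
        ((g : Matrix (Fin n) (Fin n) ℝ).det : ℂ) *
          eval (fun p : Fin n × Fin k => ((x p.1 p.2 : ℝ) : ℂ)) f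

/-- The real polynomial whose coefficients are the real parts of those of `f`. -/
noncomputable def rePoly {σ : Type*} (f : MvPolynomial σ ℂ) : MvPolynomial σ ℝ :=
  ∑ m ∈ f.support, monomial m ((f.coeff m).re)

/-- The real polynomial whose coefficients are the imaginary parts of those of `f`. -/
noncomputable def imPoly {σ : Type*} (f : MvPolynomial σ ℂ) : MvPolynomial σ ℝ :=
  ∑ m ∈ f.support, monomial m ((f.coeff m).im)

lemma coeff_rePoly {σ : Type*} (f : MvPolynomial σ ℂ) (m : σ →₀ ℕ) :
    coeff m (rePoly f) = (f.coeff m).re := by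
  classical
  rw [rePoly, coeff_sum]
  simp only [coeff_monomial]
  rw [Finset.sum_ite_eq' f.support m fun m' => (f.coeff m').re]
  by_cases h : m ∈ f.support
  · simp [h]
  · simp [h, (mem_support_iff.not.mp h : ¬ f.coeff m ≠ 0)]
    simp only [not_not, mem_support_iff, not_ne_iff] at h
    simp [h]

lemma coeff_imPoly {σ : Type*} (f : MvPolynomial σ ℂ) (m : σ →₀ ℕ) :
    coeff m (imPoly f) = (f.coeff m).im := by
  classical
  rw [imPoly, coeff_sum]
  simp only [coeff_monomial]
  rw [Finset.sum_ite_eq' f.support m fun m' => (f.coeff m').im]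
  by_cases h : m ∈ f.support
  · simp [h]
  · simp only [not_not, mem_support_iff, not_ne_iff] at h
    simp [h]

lemma eval_real_decomp {σ : Type*} (f : MvPolynomial σ ℂ) (x : σ → ℝ) :
    eval (fun i => (x i : ℂ)) f
      = (eval x (rePoly f) : ℂ) + (eval x (imPoly f) : ℂ) * Complex.I := by
  rw [rePoly, imPoly, map_sum, map_sum, eval_eq]
  push_cast [eval_monomial]
  rw [Finset.sum_mul, ← Finset.sum_add_distrib]
  refine Finset.sum_congr rfl fun d _ => ?_
  have hp : ((d.prod fun i e => x i ^ e : ℝ) : ℂ) = ∏ i ∈ d.support, ((x i : ℝ) : ℂ) ^ d i := by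
    rw [Finsupp.prod]
    push_cast
    rfl
  rw [hp]
  conv_lhs => rw [← Complex.re_add_im (coeff d f)]
  ring

lemma eq_zero_of_eval_real_zero {σ : Type*} (f : MvPolynomial σ ℂ)
    (h : ∀ x : σ → ℝ, eval (fun i => (x i : ℂ)) f = 0) : f = 0 := by
  have key : ∀ x : σ → ℝ, eval x (rePoly f) = 0 ∧ eval x (imPoly f) = 0 := by
    intro x
    have hx := h x
    rw [eval_real_decomp] at hx
    have h1 := congrArg Complex.re hx
    have h2 := congrArg Complex.im hx
    simp at h1 h2
    exact ⟨h1, h2⟩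
  have hre : rePoly f = 0 := by
    apply MvPolynomial.funext
    intro x
    simpa using (key x).1
  have him : imPoly f = 0 := by
    apply MvPolynomial.funext
    intro x
    simpa using (key x).2
  ext m
  have h1 : (f.coeff m).re = 0 := by rw [← coeff_rePoly, hre]; simp
  have h2 : (f.coeff m).im = 0 := by rw [← coeff_imPoly, him]; simp
  simp [coeff_zero]
  exact Complex.ext h1 h2

lemma detOccurs_self (n : ℕ) : DetOccurs n n := by
  classical
  refine ⟨(Matrix.of fun i j => (X (i, j) : MvPolynomial (Fin n × Fin n) ℂ)).det, ?_, ?_⟩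
  · intro hf
    have heval : ∀ φ : Fin n × Fin n → ℂ,
        eval φ (Matrix.of fun i j => (X (i, j) : MvPolynomial (Fin n × Fin n) ℂ)).det
          = (Matrix.of fun i j => φ (i, j)).det := by
      intro φ
      rw [RingHom.map_det]
      congr 1
      ext i j
      simp [Matrix.map_apply]
    have h1 := heval (fun p => if p.1 = p.2 then 1 else 0)
    rw [hf] at h1
    have : (Matrix.of fun i j : Fin n => if i = j then (1 : ℂ) else 0) = 1 := by
      ext i j
      simp [Matrix.one_apply]
    rw [this, Matrix.det_one] at h1
    simp at h1
  · intro g x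
    have heval : ∀ y : Matrix (Fin n) (Fin n) ℝ,
        eval (fun p : Fin n × Fin n => ((y p.1 p.2 : ℝ) : ℂ))
            (Matrix.of fun i j => (X (i, j) : MvPolynomial (Fin n × Fin n) ℂ)).det
          = ((y.det : ℝ) : ℂ) := by
      intro y
      rw [RingHom.map_det]
      have : (eval fun p : Fin n × Fin n => ((y p.1 p.2 : ℝ) : ℂ)).mapMatrix
          (Matrix.of fun i j => (X (i, j) : MvPolynomial (Fin n × Fin n) ℂ))
          = y.map Complex.ofRealHom := by
        ext i j
        simp [RingHom.mapMatrix_apply, Matrix.map_apply]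
      rw [this]
      rw [← RingHom.mapMatrix_apply, ← RingHom.map_det]
      simp
    rw [heval, heval]
    push_cast [Matrix.det_mul]
    ring

lemma not_detOccurs (n k : ℕ) (hk : k < n) : ¬ DetOccurs n k := by
  classical
  rintro ⟨f, hf, hfe⟩
  apply hf
  apply eq_zero_of_eval_real_zero
  intro x
  set X : Matrix (Fin n) (Fin k) ℝ := Matrix.of fun i j => x (i, j) with hX
  -- find a nonzero vector orthogonal to all columns of X
  obtain ⟨v, hv0, hvX⟩ : ∃ v : Fin n → ℝ, v ≠ 0 ∧ X.vecMul v = 0 := by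
    by_contra hcon
    push_neg at hcon
    have hinj : Function.Injective X.vecMulLinear := by
      rw [← LinearMap.ker_eq_bot, LinearMap.ker_eq_bot']
      intro v hv
      by_contra h0
      exact hcon v h0 (by simpa using hv)
    have hle := LinearMap.finrank_le_finrank_of_injective hinj
    simp [Module.finrank_fin_fun] at hle
    omega
  have hs : (0 : ℝ) < dotProduct v v := by
    obtain ⟨i, hi⟩ := Function.ne_iff.mp hv0
    exact Finset.sum_pos' (fun j _ => mul_self_nonneg _)
      ⟨i, Finset.mem_univ i, mul_self_pos.mpr (by simpa using hi)⟩
  set s : ℝ := dotProduct v v with hsdef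
  set c : ℝ := -2 / s with hcdef
  set M : Matrix (Fin n) (Fin n) ℝ := Matrix.replicateCol Unit v * Matrix.replicateRow Unit v with hM
  set A : Matrix (Fin n) (Fin n) ℝ := 1 + c • M with hA
  have hMM : M * M = s • M := by
    have h1 : (Matrix.of fun _ _ : Unit => dotProduct v v) = s • (1 : Matrix Unit Unit ℝ) := by
      ext i j
      simp [Matrix.one_apply, Subsingleton.elim i j, hsdef]
    rw [hM, Matrix.mul_assoc, ← Matrix.mul_assoc (Matrix.replicateRow Unit v), Matrix.replicateRow_mul_replicateCol, h1,
      Matrix.smul_mul, Matrix.one_mul, Matrix.mul_smul, ← hM]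
  have hstar : star A = A := by
    rw [hA, hM]
    simp [Matrix.star_eq_conjTranspose, Matrix.conjTranspose_add, Matrix.conjTranspose_smul,
      Matrix.conjTranspose_mul, Matrix.conjTranspose_replicateRow, Matrix.conjTranspose_replicateCol]
  have hmem : A ∈ Matrix.orthogonalGroup (Fin n) ℝ := by
    rw [Matrix.mem_orthogonalGroup_iff, ← Matrix.conjTranspose_eq_transpose_of_trivial, ← Matrix.star_eq_conjTranspose, hstar]
    have expand : A * A = 1 + (c + c + c * c * s) • M := by
      simp only [hA, add_mul, mul_add, Matrix.one_mul, Matrix.mul_one, Matrix.smul_mul,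
        Matrix.mul_smul, hMM, smul_smul]
      module
    rw [expand]
    have : c + c + c * c * s = 0 := by
      rw [hcdef]
      field_simp
      ring
    rw [this, zero_smul, add_zero]
  have hAX : A * X = X := by
    have hrow : Matrix.replicateRow Unit v * X = 0 := by
      rw [← Matrix.replicateRow_vecMul, hvX]
      ext i j
      simp
    rw [hA, Matrix.add_mul, Matrix.one_mul, Matrix.smul_mul, hM, Matrix.mul_assoc, hrow,
      Matrix.mul_zero, smul_zero, add_zero]
  have hdet : A.det = -1 := by
    have hAeq : A = 1 + Matrix.replicateCol Unit v * Matrix.replicateRow Unit (c • v) := by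
      rw [hA, hM]
      congr 1
      rw [Matrix.replicateRow_smul, Matrix.mul_smul]
    rw [hAeq, Matrix.det_one_add_mul_comm, Matrix.replicateRow_mul_replicateCol, Matrix.det_unique]
    simp only [Matrix.add_apply, Matrix.one_apply_eq, Matrix.of_apply]
    rw [smul_dotProduct]
    rw [hcdef, ← hsdef]
    field_simp
    ring_nf
    rw [mul_inv_cancel₀ hs.ne']
    ring
  have key := hfe ⟨A, hmem⟩ X
  simp only [hAX] at key
  rw [hdet] at key
  have hx0 : eval (fun p : Fin n × Fin k => ((X p.1 p.2 : ℝ) : ℂ)) f = 0 := by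
    have h2 : (2 : ℂ) * eval (fun p : Fin n × Fin k => ((X p.1 p.2 : ℝ) : ℂ)) f = 0 := by
      push_cast at key
      linear_combination key
    have := mul_eq_zero.mp h2
    simpa using this
  convert hx0 using 2
  rfl

/-- Conservation relation for the determinant character: `det` does not occur
in `ℂ[ℝ^{n×k}]` for `k < n`, but occurs in `ℂ[ℝ^{n×n}]`; i.e. its first
occurrence index is `n`. -/
theorem det_first_occurrence (n : ℕ) :
    (∀ k < n, ¬ DetOccurs n k) ∧ DetOccurs n n := by
  exact ⟨fun k hk => not_detOccurs n k hk, detOccurs_self n⟩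
end
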